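/- Let (X,+) be an abelian group equipped with a translation-invariant metric d such that every nonempty open ball in X contains infinitely many elements. Then the family of net-sets in X is dense in the hyperspace of nonempty compact subsets of X with the Hausdorff distance: for every nonempty compact set K ⊆ X and every ε > 0 there exists a net-set A ⊆ X with d_H(A,K) < ε. -/

import Mathlib

open Metric

/-- A net-set: a finite set with at least three elements such that distinct two-element
subsets yield disjoint difference pairs. -/
def IsNetSet {X : Type*} [AddCommGroup X] (A : Set X) : Prop :=
  A.Finite ∧ 3 ≤ A.ncard ∧
    ∀ z ∈ A, ∀ t ∈ A, ∀ u ∈ A, ∀ v ∈ A, z ≠ t → u ≠ v →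
      ({z, t} : Set X) ≠ ({u, v} : Set X) →
      ({z - t, t - z} : Set X) ∩ ({v - u, u - v} : Set X) = ∅

private lemma cancel_helper {X : Type*} [AddCommGroup X] {p q r s : X}
    (h : p = q) (h2 : r - s - (p - q) = 0) : r = s := by
  subst h
  simpa [sub_eq_zero] using h2

private lemma two_ne {X : Type*} [AddCommGroup X] [MetricSpace X]
    (hd : ∀ x y z : X, dist (x + z) (y + z) = dist x y) (a f x y : X) (r : ℝ)
    (h1 : dist a f < r) (h2 : 2*r ≤ dist (x + y) (f + f)) : a + a ≠ x + y := by
  intro he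
  have e1 : dist (a+a) (f+a) = dist a f := hd a f a
  have e2 : dist (f+a) (f+f) = dist a f := by
    have := hd a f f; rw [add_comm f a]; exact this
  have := dist_triangle (a+a) (f+a) (f+f)
  rw [e1, e2, he] at this
  linarith

private lemma exists_r {X : Type*} [AddCommGroup X] [MetricSpace X]
    (δ : ℝ) (hδ : 0 < δ) (f : X) (l : List (X × X))
    (hl : ∀ p ∈ l, p.1 ≠ p.2 → p.1 + p.2 ≠ f + f) :
    ∃ r, 0 < r ∧ r ≤ δ ∧ ∀ p ∈ l, p.1 ≠ p.2 → 2*r ≤ dist (p.1 + p.2) (f + f) := by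
  induction l with
  | nil => exact ⟨δ, hδ, le_refl _, by simp⟩
  | cons p l ih =>
    obtain ⟨r, hr0, hrδ, hr⟩ := ih (fun q hq => hl q (List.mem_cons_of_mem _ hq))
    by_cases hp : p.1 = p.2
    · refine ⟨r, hr0, hrδ, ?_⟩
      intro q hq hne
      rcases List.mem_cons.1 hq with rfl | hq
      · exact absurd hp hne
      · exact hr q hq hne
    · have hpos : 0 < dist (p.1 + p.2) (f + f) := by
        rw [dist_pos]; exact hl p (List.mem_cons_self) hp
      refine ⟨min r (dist (p.1 + p.2) (f + f) / 2), by positivity,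
        (min_le_left _ _).trans hrδ, ?_⟩
      intro q hq hne
      rcases List.mem_cons.1 hq with rfl | hq
      · have := min_le_right r (dist (q.1 + q.2) (f + f) / 2); linarith
      · have h1 := min_le_left r (dist (p.1 + p.2) (f + f) / 2)
        have h2 := hr q hq hne; linarith

private lemma forall₂_left {X : Type*} {R : X → X → Prop} :
    ∀ {A L : List X}, List.Forall₂ R A L → ∀ a ∈ A, ∃ f ∈ L, R a f := by
  intro A L h
  induction h with
  | nil => simp
  | cons hrel _ ih =>
    intro x hx
    rcases List.mem_cons.1 hx with rfl | hx
    · exact ⟨_, List.mem_cons_self, hrel⟩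
    · obtain ⟨f, hf, hRf⟩ := ih x hx
      exact ⟨f, List.mem_cons_of_mem _ hf, hRf⟩

private lemma forall₂_right {X : Type*} {R : X → X → Prop} :
    ∀ {A L : List X}, List.Forall₂ R A L → ∀ f ∈ L, ∃ a ∈ A, R a f := by
  intro A L h
  induction h with
  | nil => simp
  | cons hrel _ ih =>
    intro x hx
    rcases List.mem_cons.1 hx with rfl | hx
    · exact ⟨_, List.mem_cons_self, hrel⟩
    · obtain ⟨a, ha, hRa⟩ := ih x hx
      exact ⟨a, List.mem_cons_of_mem _ ha, hRa⟩

private lemma key_lemma {X : Type*} [AddCommGroup X] [MetricSpace X]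
    (hd : ∀ x y z : X, dist (x + z) (y + z) = dist x y)
    (hball : ∀ (x : X) (r : ℝ), 0 < r → (Metric.ball x r).Infinite)
    (D : Finset X) (δ : ℝ) (hδ : 0 < δ) :
    ∀ L : List X, (∀ f ∈ L, f + f ∈ D) →
    ∃ A : List X, List.Forall₂ (fun a f => dist a f < δ) A L ∧ A.Nodup ∧
      (∀ x ∈ A, ∀ y ∈ A, x ≠ y → x + y ∉ D) ∧
      (∀ z ∈ A, ∀ t ∈ A, ∀ u ∈ A, ∀ v ∈ A, z ≠ t → u ≠ v →
        ({z, t} : Set X) ≠ ({u, v} : Set X) → z - t ≠ u - v) := by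
  intro L
  induction L with
  | nil => exact fun _ => ⟨[], List.Forall₂.nil, List.nodup_nil, by simp, by simp⟩
  | cons f L ih =>
    intro hLD
    obtain ⟨A, hA2, hnodup, hsum, hgood⟩ := ih (fun g hg => hLD g (List.mem_cons_of_mem _ hg))
    have hfD : f + f ∈ D := hLD f (List.mem_cons_self)
    obtain ⟨r, hr0, hrδ, hr⟩ := exists_r δ hδ f (A.product A) (by
      intro p hp hne heq
      rcases p with ⟨x, y⟩
      rw [List.pair_mem_product] at hp
      exact hsum x hp.1 y hp.2 hne (by rw [heq]; exact hfD))
    have hAfin : ({x | x ∈ A} : Set X).Finite := A.finite_toSet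
    set bad : Set X := ({x | x ∈ A} ∪ {w | ∃ x ∈ A, ∃ y ∈ A, ∃ z ∈ A, w = x + y - z}
        ∪ {w | ∃ x ∈ A, ∃ y ∈ A, ∃ z ∈ A, w = x - y + z}
        ∪ {w | ∃ d ∈ D, ∃ x ∈ A, w = d - x} : Set X) with hbaddef
    have hbadfin : bad.Finite := by
      refine ((hAfin.union ?_).union ?_).union ?_
      · refine Set.Finite.subset ((hAfin.prod (hAfin.prod hAfin)).image
          (fun p : X × X × X => p.1 + p.2.1 - p.2.2)) ?_
        rintro w ⟨x, hx, y, hy, z, hz, rfl⟩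
        exact ⟨(x, y, z), ⟨hx, hy, hz⟩, rfl⟩
      · refine Set.Finite.subset ((hAfin.prod (hAfin.prod hAfin)).image
          (fun p : X × X × X => p.1 - p.2.1 + p.2.2)) ?_
        rintro w ⟨x, hx, y, hy, z, hz, rfl⟩
        exact ⟨(x, y, z), ⟨hx, hy, hz⟩, rfl⟩
      · refine Set.Finite.subset ((D.finite_toSet.prod hAfin).image
          (fun p : X × X => p.1 - p.2)) ?_
        rintro w ⟨d, hdD, x, hx, rfl⟩
        exact ⟨(d, x), ⟨hdD, hx⟩, rfl⟩
    obtain ⟨a, haball, habad⟩ := ((hball f r hr0).diff hbadfin).nonempty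
    have haf : dist a f < r := mem_ball.1 haball
    have hanotA : a ∉ A := fun h => habad (Or.inl (Or.inl (Or.inl h)))
    have h1 : ∀ x ∈ A, ∀ y ∈ A, ∀ z ∈ A, a ≠ x + y - z := by
      intro x hx y hy z hz he
      exact habad (Or.inl (Or.inl (Or.inr ⟨x, hx, y, hy, z, hz, he⟩)))
    have h2 : ∀ x ∈ A, ∀ y ∈ A, ∀ z ∈ A, a ≠ x - y + z := by
      intro x hx y hy z hz he
      exact habad (Or.inl (Or.inr ⟨x, hx, y, hy, z, hz, he⟩))
    have h3 : ∀ d ∈ D, ∀ x ∈ A, a ≠ d - x := by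
      intro d hdD x hx he
      exact habad (Or.inr ⟨d, hdD, x, hx, he⟩)
    have h2a : ∀ x ∈ A, ∀ y ∈ A, x ≠ y → a + a ≠ x + y := by
      intro x hx y hy hne
      exact two_ne hd a f x y r haf
        (hr (x, y) (List.pair_mem_product.2 ⟨hx, hy⟩) hne)
    refine ⟨a :: A, List.Forall₂.cons (haf.trans_le hrδ) hA2,
      List.nodup_cons.2 ⟨hanotA, hnodup⟩, ?_, ?_⟩
    · intro x hx y hy hne hdD
      rcases List.mem_cons.1 hx with hxa | hx
      · rcases List.mem_cons.1 hy with hya | hy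
        · exact hne (hxa.trans hya.symm)
        · rw [hxa] at hdD
          exact h3 (a + y) hdD y hy (by abel)
      · rcases List.mem_cons.1 hy with hya | hy
        · rw [hya] at hdD
          exact h3 (x + a) hdD x hx (by abel)
        · exact hsum x hx y hy hne hdD
    · intro z hz t ht u hu v hv hzt huv hpair heq
      rcases List.mem_cons.1 hz with hza | hz
      · rcases List.mem_cons.1 ht with hta | ht
        · exact hzt (hza.trans hta.symm)
        · rcases List.mem_cons.1 hu with hua | hu
          · rcases List.mem_cons.1 hv with hva | hv
            · exact huv (hua.trans hva.symm)
            · -- (a, t, a, v): t = v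
              rw [hza, hua] at heq hpair
              have htv : t = v := cancel_helper heq.symm (by abel)
              exact hpair (by rw [htv])
          · rcases List.mem_cons.1 hv with hva | hv
            · -- (a, t, u, a): a + a = t + u
              rw [hza, hva] at heq hpair
              by_cases htu : t = u
              · subst htu
                exact hpair (Set.pair_comm _ _)
              · exact h2a t ht u hu htu (cancel_helper heq (by abel))
            · -- (a, t, u, v)
              rw [hza] at heq
              exact h1 t ht u hu v hv (cancel_helper heq (by abel))
      · rcases List.mem_cons.1 ht with hta | ht
        · rcases List.mem_cons.1 hu with hua | hu
          · rcases List.mem_cons.1 hv with hva | hv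
            · exact huv (hua.trans hva.symm)
            · -- (z, a, a, v): a + a = z + v
              rw [hta, hua] at heq hpair
              by_cases hzv : z = v
              · subst hzv
                exact hpair (Set.pair_comm _ _)
              · exact h2a z hz v hv hzv (cancel_helper heq.symm (by abel))
          · rcases List.mem_cons.1 hv with hva | hv
            · -- (z, a, u, a): z = u
              rw [hta, hva] at heq hpair
              have hzu : z = u := cancel_helper heq (by abel)
              exact hpair (by rw [hzu])
            · -- (z, a, u, v)
              rw [hta] at heq
              exact h2 z hz u hu v hv (cancel_helper heq.symm (by abel))
        · rcases List.mem_cons.1 hu with hua | hu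
          · rcases List.mem_cons.1 hv with hva | hv
            · exact huv (hua.trans hva.symm)
            · -- (z, t, a, v)
              rw [hua] at heq
              exact h1 v hv z hz t ht (cancel_helper heq.symm (by abel))
          · rcases List.mem_cons.1 hv with hva | hv
            · -- (z, t, u, a)
              rw [hva] at heq
              exact h2 u hu z hz t ht (cancel_helper heq (by abel))
            · exact hgood z hz t ht u hu v hv hzt huv hpair heq

theorem netSets_dense {X : Type*} [AddCommGroup X] [MetricSpace X]
    (hd : ∀ x y z : X, dist (x + z) (y + z) = dist x y)
    (hball : ∀ (x : X) (r : ℝ), 0 < r → (Metric.ball x r).Infinite) :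
    ∀ K : Set X, K.Nonempty → IsCompact K → ∀ ε > 0,
      ∃ A : Set X, IsNetSet A ∧ hausdorffDist A K < ε := by
  classical
  intro K hKne hK ε hε
  obtain ⟨k₀, hk₀⟩ := hKne
  have hε4 : 0 < ε / 4 := by linarith
  obtain ⟨t, htK, htfin, htcov⟩ := hK.finite_cover_balls hε4
  set L : List X := k₀ :: k₀ :: k₀ :: htfin.toFinset.toList with hLdef
  have hLK : ∀ f ∈ L, f ∈ K := by
    intro f hf
    simp only [hLdef, List.mem_cons] at hf
    rcases hf with rfl | rfl | rfl | hf
    · exact hk₀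
    · exact hk₀
    · exact hk₀
    · exact htK (htfin.mem_toFinset.1 (Finset.mem_toList.1 hf))
  have hcov : ∀ x ∈ K, ∃ f ∈ L, dist x f < ε / 4 := by
    intro x hx
    have := htcov hx
    rw [Set.mem_iUnion₂] at this
    obtain ⟨i, hi, hxi⟩ := this
    refine ⟨i, ?_, mem_ball.1 hxi⟩
    simp only [hLdef, List.mem_cons]
    exact Or.inr (Or.inr (Or.inr (Finset.mem_toList.2 (htfin.mem_toFinset.2 hi))))
  set D : Finset X := (L.map (fun g => g + g)).toFinset with hDdef
  obtain ⟨A, hA2, hnodup, _, hgood⟩ := key_lemma hd hball D (ε / 4) hε4 L (by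
    intro f hf
    rw [hDdef, List.mem_toFinset, List.mem_map]
    exact ⟨f, hf, rfl⟩)
  refine ⟨{x | x ∈ A}, ⟨A.finite_toSet, ?_, ?_⟩, ?_⟩
  · -- cardinality
    have hset : ({x | x ∈ A} : Set X) = ↑A.toFinset := by
      simp [List.coe_toFinset]
    rw [hset, Set.ncard_coe_finset, List.toFinset_card_of_nodup hnodup,
      hA2.length_eq, hLdef]
    simp
  · -- net-set property
    intro z hz t ht u hu v hv hzt huv hpair
    rw [Set.eq_empty_iff_forall_notMem]
    rintro w ⟨hw1, hw2⟩
    simp only [Set.mem_insert_iff, Set.mem_singleton_iff] at hw1 hw2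
    have hpair' : ({z, t} : Set X) ≠ ({v, u} : Set X) := by
      rw [Set.pair_comm v u]; exact hpair
    have hpair2 : ({t, z} : Set X) ≠ ({u, v} : Set X) := by
      rw [Set.pair_comm t z]; exact hpair
    have hpair2' : ({t, z} : Set X) ≠ ({v, u} : Set X) := by
      rw [Set.pair_comm v u]; exact hpair2
    rcases hw1 with rfl | rfl
    · rcases hw2 with h | h
      · exact hgood z hz t ht v hv u hu hzt huv.symm hpair' h
      · exact hgood z hz t ht u hu v hv hzt huv hpair h
    · rcases hw2 with h | h
      · exact hgood t ht z hz v hv u hu hzt.symm huv.symm hpair2' h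
      · exact hgood t ht z hz u hu v hv hzt.symm huv hpair2 h
  · -- Hausdorff distance
    have hle : hausdorffDist {x | x ∈ A} K ≤ ε / 2 := by
      apply hausdorffDist_le_of_mem_dist (by linarith)
      · intro x hx
        obtain ⟨f, hf, hdist⟩ := forall₂_left hA2 x hx
        exact ⟨f, hLK f hf, by linarith [hdist]⟩
      · intro x hx
        obtain ⟨f, hf, hdist⟩ := hcov x hx
        obtain ⟨a, ha, hdista⟩ := forall₂_right hA2 f hf
        refine ⟨a, ha, ?_⟩
        have := dist_triangle x f a
        rw [dist_comm f a] at this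
        linarith
    linarith
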